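/- Lemma 5 (abstract boundedness lemma): For all constants c₁ ≥ 1 and c₂ > 0 there exists κ > 0 with the following property. Let T > 0, let ψ : [0,T] → ℝ be continuously differentiable with ψ(t) ≥ 0 for all t, let D : [0,T] → ℝ be continuous with D(t) ≥ 0 for all t, and let ε ≥ 0. If (i) ψ'(t) ≤ −D(t)·(1 − c₁·(ψ(t) + ψ(t)²)) + ε² for all t ∈ [0,T], (ii) D(t) + ε² ≥ c₂·ψ(t) for all t ∈ [0,T], and (iii) ψ(0) + ε ≤ κ, then ψ(t) ≤ κ for all t ∈ [0,T]. -/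
import Mathlib

theorem abstract_boundedness_lemma (c₁ c₂ : ℝ) (hc₁ : 1 ≤ c₁) (hc₂ : 0 < c₂) :
    ∃ κ > (0 : ℝ), ∀ (T : ℝ), 0 < T → ∀ (ψ ψ' D : ℝ → ℝ) (ε : ℝ),
      (∀ t ∈ Set.Icc 0 T, HasDerivWithinAt ψ (ψ' t) (Set.Icc 0 T) t) →
      ContinuousOn ψ' (Set.Icc 0 T) →
      (∀ t ∈ Set.Icc 0 T, 0 ≤ ψ t) →
      ContinuousOn D (Set.Icc 0 T) →
      (∀ t ∈ Set.Icc 0 T, 0 ≤ D t) →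
      0 ≤ ε →
      (∀ t ∈ Set.Icc 0 T, ψ' t ≤ -D t * (1 - c₁ * (ψ t + ψ t ^ 2)) + ε ^ 2) →
      (∀ t ∈ Set.Icc 0 T, c₂ * ψ t ≤ D t + ε ^ 2) →
      ψ 0 + ε ≤ κ →
      ∀ t ∈ Set.Icc 0 T, ψ t ≤ κ := by
  have hc₁0 : (0:ℝ) < c₁ := lt_of_lt_of_le one_pos hc₁
  refine ⟨min (min 1 (1/(4*c₁))) (c₂/4), ?_, ?_⟩
  · positivity
  set κ := min (min 1 (1/(4*c₁))) (c₂/4) with hκdef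
  have hκ0 : 0 < κ := by positivity
  have hκ1 : κ ≤ 1 := le_trans (min_le_left _ _) (min_le_left _ _)
  have hκ2 : κ ≤ 1/(4*c₁) := le_trans (min_le_left _ _) (min_le_right _ _)
  have hκ3 : κ ≤ c₂/4 := min_le_right _ _
  intro T hT ψ ψ' D ε hψd hψ'c hψ0 hDc hD0 hε hineq hdiss h0
  have h0mem : (0:ℝ) ∈ Set.Icc 0 T := ⟨le_refl _, hT.le⟩
  have hεκ : ε ≤ κ := by have := hψ0 0 h0mem; linarith
  have hψcont : ContinuousOn ψ (Set.Icc 0 T) := fun t ht =>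
    (hψd t ht).continuousWithinAt
  have hf' : ∀ x ∈ Set.Ico 0 T, HasDerivWithinAt ψ (ψ' x) (Set.Ici x) x := by
    intro x hx
    exact (hψd x (Set.Ico_subset_Icc_self hx)).mono_of_mem_nhdsWithin
      (Icc_mem_nhdsGE_of_mem hx)
  have hB : ∀ x : ℝ, HasDerivAt (fun _ => κ) ((fun _ => (0:ℝ)) x) x := fun x =>
    hasDerivAt_const x κ
  have ha : ψ 0 ≤ κ := by linarith
  have bound : ∀ x ∈ Set.Ico 0 T, ψ x = κ → ψ' x < 0 := by
    intro x hx hψx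
    have hxm : x ∈ Set.Icc 0 T := Set.Ico_subset_Icc_self hx
    have h1 := hineq x hxm
    have h2 := hdiss x hxm
    have h3 := hD0 x hxm
    rw [hψx] at h1 h2
    have hεsq : ε^2 ≤ κ * (c₂/4) := by nlinarith
    have hfac : (1:ℝ)/2 ≤ 1 - c₁ * (κ + κ^2) := by
      have : κ + κ^2 ≤ 2*κ := by nlinarith
      have h4 : c₁ * (κ + κ^2) ≤ c₁ * (2*κ) := by nlinarith
      have h5 : c₁ * (2*κ) ≤ c₁ * (2 * (1/(4*c₁))) := by nlinarith
      have : c₁ * (2 * (1/(4*c₁))) = 1/2 := by field_simp; ring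
      linarith
    -- D x ≥ c₂κ - ε²
    have hD : c₂ * κ - ε^2 ≤ D x := by linarith
    have : -D x * (1 - c₁ * (κ + κ^2)) ≤ -(D x) * (1/2) := by nlinarith
    nlinarith
  exact fun t ht =>
    image_le_of_deriv_right_lt_deriv_boundary hψcont hf' ha hB bound ht
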